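/- Let K be a finite field of characteristic 2, G a finite group, and V a simple KG-module carrying a non-zero G-invariant quadratic form Q. Then either V is the trivial module and the polarization B_Q is zero, or Q is non-degenerate. In both cases Q is the unique non-zero G-invariant quadratic form on V up to KG-isometry. -/

import Mathlib

open QuadraticMap

variable {K : Type*} [Field K] {G : Type*} [Group G]
variable {V W : Type*} [AddCommGroup V] [Module K V] [AddCommGroup W] [Module K W]

/-- `U` is a `KG`-submodule, i.e. invariant under the representation `ρ`. -/
def IsSubrep (ρ : Representation K G V) (U : Submodule K V) : Prop :=
  ∀ g : G, ∀ v ∈ U, ρ g v ∈ U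

/-- The quadratic form `Q` is `G`-invariant. -/
def GInvariantQF (ρ : Representation K G V) (Q : QuadraticForm K V) : Prop :=
  ∀ g v, Q (ρ g v) = Q v

/-- Orthogonal complement of a submodule with respect to the polarization of `Q`. -/
def qperp (Q : QuadraticForm K V) (U : Submodule K V) : Submodule K V :=
  LinearMap.BilinForm.orthogonal Q.polarBilin U

/-- `Q` is non-degenerate: the radical of its polarization is zero. -/
def QNondeg (Q : QuadraticForm K V) : Prop :=
  LinearMap.BilinForm.Nondegenerate Q.polarBilin

/-- `(V, Q)` is metabolic: there is a `KG`-submodule `N` with `N = N^⊥` and `Q(N) = 0`. -/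
def Metabolic (ρ : Representation K G V) (Q : QuadraticForm K V) : Prop :=
  ∃ N : Submodule K V, IsSubrep ρ N ∧ N = qperp Q N ∧ ∀ v ∈ N, Q v = 0

/-- `(V, Q)` is anisotropic: `Q` does not vanish on any non-zero `KG`-submodule. -/
def AnisotropicRep (ρ : Representation K G V) (Q : QuadraticForm K V) : Prop :=
  ∀ U : Submodule K V, IsSubrep ρ U → (∀ v ∈ U, Q v = 0) → U = ⊥

/-- The product (orthogonal direct sum) of two representations. -/
def prodRep (ρ : Representation K G V) (σ : Representation K G W) :
    Representation K G (V × W) :=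
  ⟨⟨fun g => (ρ g).prodMap (σ g), by ext v <;> simp⟩, fun g h => by ext v <;> simp⟩

/-- `V` is a simple `KG`-module. -/
def SimpleRep (ρ : Representation K G V) : Prop :=
  Nontrivial V ∧ ∀ U : Submodule K V, IsSubrep ρ U → U = ⊥ ∨ U = ⊤

/-- `V` is a self-dual `KG`-module. -/
def SelfDualRep (ρ : Representation K G V) : Prop :=
  ∃ f : V ≃ₗ[K] Module.Dual K V, ∀ g v, f (ρ g v) = ρ.dual g (f v)

/-! ### Auxiliary lemmas for statement 10 -/

lemma char2K (h2 : ringChar K = 2) : (2 : K) = 0 := by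
  haveI : CharP K 2 := h2 ▸ ringChar.charP K
  exact_mod_cast CharP.cast_eq_zero K 2

lemma sq_injK (h2 : ringChar K = 2) : Function.Injective (fun x : K => x * x) := by
  intro x y hxy
  simp only at hxy
  have h0 := char2K h2
  have h : (x - y) * (x - y) = 0 := by
    linear_combination hxy + (y * y - x * y) * h0
  exact sub_eq_zero.mp (mul_self_eq_zero.mp h)

lemma sq_surjK [Fintype K] (h2 : ringChar K = 2) :
    Function.Surjective (fun x : K => x * x) :=
  Finite.injective_iff_surjective.mp (sq_injK h2)

/-- An additive, square-semilinear map admits a linear "square root". -/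
lemma exists_lin_sqrt [Fintype K] (h2 : ringChar K = 2) (D : V → K)
    (hadd : ∀ v w, D (v + w) = D v + D w)
    (hsmul : ∀ (c : K) v, D (c • v) = c * c * D v) :
    ∃ f : V →ₗ[K] K, ∀ v, f v * f v = D v := by
  choose s hs using fun v => sq_surjK h2 (D v)
  simp only at hs
  refine ⟨⟨⟨s, fun v w => ?_⟩, fun c v => ?_⟩, hs⟩
  · apply sq_injK h2
    simp only
    rw [hs, hadd, ← hs v, ← hs w]
    linear_combination (-(s v * s w)) * char2K h2
  · apply sq_injK h2
    simp only [RingHom.id_apply, smul_eq_mul]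
    rw [hs, hsmul, ← hs v]
    ring

/-- Half of Schur's lemma: a nonzero equivariant endomorphism of a simple module
is injective. -/
lemma schur_inj (ρ : Representation K G V) (hs : SimpleRep ρ) (e : V →ₗ[K] V)
    (hcomm : ∀ g v, e (ρ g v) = ρ g (e v)) (he : e ≠ 0) : Function.Injective e := by
  have hker : IsSubrep ρ (LinearMap.ker e) := by
    intro g v hv
    rw [LinearMap.mem_ker] at hv ⊢
    rw [hcomm, hv, map_zero]
  rcases hs.2 _ hker with h | h
  · exact LinearMap.ker_eq_bot.mp h
  · exact absurd (LinearMap.ker_eq_top.mp h) he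

/-- A nonzero invariant functional on a simple module is an isomorphism onto `K`. -/
lemma equiv_of_inv_functional (ρ : Representation K G V) (hs : SimpleRep ρ)
    (f : V →ₗ[K] K) (hf : f ≠ 0) (hcomm : ∀ g v, f (ρ g v) = f v) :
    ∃ F : V ≃ₗ[K] K, (∀ g v, F (ρ g v) = F v) ∧ ∀ v, F v = f v := by
  have hker : IsSubrep ρ (LinearMap.ker f) := by
    intro g v hv
    rw [LinearMap.mem_ker] at hv ⊢
    rw [hcomm, hv]
  have hinj : Function.Injective f := by
    rcases hs.2 _ hker with h | h
    · exact LinearMap.ker_eq_bot.mp h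
    · exact absurd (LinearMap.ker_eq_top.mp h) hf
  obtain ⟨v, hv⟩ : ∃ v, f v ≠ 0 := by
    by_contra h
    push_neg at h
    exact hf (LinearMap.ext h)
  have hsurj : Function.Surjective f := by
    intro c
    exact ⟨(c * (f v)⁻¹) • v, by rw [_root_.map_smul, smul_eq_mul, mul_assoc, inv_mul_cancel₀ hv,
      mul_one]⟩
  exact ⟨LinearEquiv.ofBijective f ⟨hinj, hsurj⟩, fun g w => hcomm g w, fun _ => rfl⟩

/-- On a one-dimensional space in characteristic two, every polarization vanishes. -/
lemma polar_zero_of_equiv (h2 : ringChar K = 2) (F : V ≃ₗ[K] K)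
    (Q : QuadraticForm K V) : ∀ v w, polar (⇑Q) v w = 0 := by
  have h0 := char2K h2
  have hvv : ∀ v, polar (⇑Q) v v = 0 := by
    intro v
    have hv0 : v + v = 0 := by rw [← two_smul K v, h0, zero_smul]
    rw [QuadraticMap.polar, hv0, QuadraticMap.map_zero]
    linear_combination (-(Q v)) * h0
  intro v w
  rcases eq_or_ne v 0 with rfl | hv
  · exact polar_zero_left Q w
  · have hw : w = (F w * (F v)⁻¹) • v := by
      apply F.injective
      rw [LinearEquiv.map_smul, smul_eq_mul, mul_assoc]
      rw [inv_mul_cancel₀ (fun h => hv (F.map_eq_zero_iff.mp h)), mul_one]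
    rw [hw, polar_smul_right, hvv, smul_zero]

/-- Trivial case: zero polarization forces `V ≅ K` with trivial `G`-action, with
`Q` the square of the isomorphism. -/
lemma triv_case [Fintype K] (h2 : ringChar K = 2) (ρ : Representation K G V)
    (hs : SimpleRep ρ) (Q : QuadraticForm K V) (hQ : Q ≠ 0) (hinv : GInvariantQF ρ Q)
    (hb : ∀ v w, polar (⇑Q) v w = 0) :
    ∃ F : V ≃ₗ[K] K, (∀ g v, F (ρ g v) = F v) ∧ ∀ v, F v * F v = Q v := by
  obtain ⟨f, hf⟩ := exists_lin_sqrt h2 (⇑Q)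
    (fun v w => by
      have h := hb v w
      rw [QuadraticMap.polar] at h
      linear_combination h)
    (fun c v => by rw [QuadraticMap.map_smul, smul_eq_mul])
  have hf0 : f ≠ 0 := by
    intro h
    apply hQ
    ext v
    have := hf v
    rw [h] at this
    simpa using this.symm
  have hfinv : ∀ g v, f (ρ g v) = f v := by
    intro g v
    apply sq_injK h2
    simp only
    rw [hf, hf, hinv]
  obtain ⟨F, hFinv, hFeq⟩ := equiv_of_inv_functional ρ hs f hf0 hfinv
  exact ⟨F, hFinv, fun v => by rw [hFeq]; exact hf v⟩

lemma rho_cancel (ρ : Representation K G V) (g : G) (w : V) : ρ g (ρ g⁻¹ w) = w := by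
  have h : ρ g * ρ g⁻¹ = 1 := by rw [← map_mul, mul_inv_cancel, map_one]
  calc ρ g (ρ g⁻¹ w) = (ρ g * ρ g⁻¹) w := rfl
    _ = w := by rw [h]; rfl

lemma polar_inv (ρ : Representation K G V) (Q : QuadraticForm K V)
    (hinv : GInvariantQF ρ Q) (g : G) (v w : V) :
    polar (⇑Q) (ρ g v) (ρ g w) = polar (⇑Q) v w := by
  rw [QuadraticMap.polar, QuadraticMap.polar, ← map_add, hinv, hinv, hinv]

lemma polar_move (ρ : Representation K G V) (Q : QuadraticForm K V)
    (hinv : GInvariantQF ρ Q) (g : G) (v w : V) :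
    polar (⇑Q) (ρ g v) w = polar (⇑Q) v (ρ g⁻¹ w) := by
  conv_lhs => rw [← rho_cancel ρ g w]
  rw [polar_inv ρ Q hinv]

/-- Dichotomy: the polarization of an invariant form on a simple module is either zero
or non-degenerate. -/
lemma polar_cases (ρ : Representation K G V) (hs : SimpleRep ρ)
    (Q : QuadraticForm K V) (hinv : GInvariantQF ρ Q) :
    (∀ v w, polar (⇑Q) v w = 0) ∨ QNondeg Q := by
  have hker : IsSubrep ρ (LinearMap.ker Q.polarBilin) := by
    intro g v hv
    rw [LinearMap.mem_ker] at hv ⊢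
    ext w
    have h1 : polar (⇑Q) v (ρ g⁻¹ w) = 0 := by
      have := congrArg (fun (φ : Module.Dual K V) => φ (ρ g⁻¹ w)) hv
      simpa [polarBilin_apply_apply] using this
    simp only [polarBilin_apply_apply, LinearMap.zero_apply]
    rw [polar_move ρ Q hinv, h1]
  rcases hs.2 _ hker with h | h
  · right
    refine ⟨fun v hv => ?_, fun v hv => ?_⟩
    · have : v ∈ LinearMap.ker Q.polarBilin := by
        rw [LinearMap.mem_ker]
        ext w
        simpa [polarBilin_apply_apply] using hv w
      rw [h] at this
      simpa using this
    · have : v ∈ LinearMap.ker Q.polarBilin := by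
        rw [LinearMap.mem_ker]
        ext w
        have h' := hv w
        simp only [polarBilin_apply_apply] at h'
        rw [polar_comm] at h'
        simpa [polarBilin_apply_apply] using h'
      rw [h] at this
      simpa using this
  · left
    intro v w
    have : Q.polarBilin v = 0 := LinearMap.mem_ker.mp (h ▸ Submodule.mem_top)
    have := congrArg (fun (φ : Module.Dual K V) => φ w) this
    simpa [polarBilin_apply_apply] using this

/-- One-dimensional-with-square case of the uniqueness statement. -/
lemma triv_iso (ρ : Representation K G V) (F F' : V ≃ₗ[K] K)
    (Q Q' : QuadraticForm K V) (hF : ∀ v, F v * F v = Q v)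
    (hF' : ∀ v, F' v * F' v = Q' v) :
    ∃ e : V ≃ₗ[K] V, (∀ g v, e (ρ g v) = ρ g (e v)) ∧ ∀ v, Q' (e v) = Q v := by
  set μ : K := F (F'.symm 1) with hμdef
  have hμ : μ ≠ 0 := by
    intro h
    have h1 : F'.symm 1 = 0 := F.map_eq_zero_iff.mp h
    have := congrArg F' h1
    rw [F'.apply_symm_apply, map_zero] at this
    exact one_ne_zero this
  have hrel : ∀ v, F v = F' v * μ := by
    intro v
    have hv : v = (F' v) • F'.symm 1 := by
      apply F'.injective
      rw [LinearEquiv.map_smul, F'.apply_symm_apply, smul_eq_mul, mul_one]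
    calc F v = F ((F' v) • F'.symm 1) := by rw [← hv]
      _ = F' v * μ := by rw [LinearEquiv.map_smul, smul_eq_mul]
  have hinj : Function.Injective (μ • (LinearMap.id : V →ₗ[K] V)) := by
    intro x y h
    simp only [LinearMap.smul_apply, LinearMap.id_apply] at h
    exact smul_right_injective V hμ h
  have hsurj : Function.Surjective (μ • (LinearMap.id : V →ₗ[K] V)) := by
    intro v
    refine ⟨μ⁻¹ • v, ?_⟩
    simp only [LinearMap.smul_apply, LinearMap.id_apply, smul_smul]
    rw [mul_inv_cancel₀ hμ, one_smul]
  refine ⟨LinearEquiv.ofBijective _ ⟨hinj, hsurj⟩, fun g v => ?_, fun v => ?_⟩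
  · show (μ • (LinearMap.id : V →ₗ[K] V)) (ρ g v) = ρ g ((μ • (LinearMap.id : V →ₗ[K] V)) v)
    simp only [LinearMap.smul_apply, LinearMap.id_apply, _root_.map_smul]
  · show Q' ((μ • (LinearMap.id : V →ₗ[K] V)) v) = Q v
    simp only [LinearMap.smul_apply, LinearMap.id_apply]
    rw [QuadraticMap.map_smul, smul_eq_mul, ← hF', ← hF v, hrel v]
    ring

/-- Uniqueness in the non-degenerate case. -/
lemma nondeg_case [Fintype K] [FiniteDimensional K V] (h2 : ringChar K = 2)
    (ρ : Representation K G V) (hs : SimpleRep ρ) (Q Q' : QuadraticForm K V)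
    (hinv : GInvariantQF ρ Q) (hinv' : GInvariantQF ρ Q')
    (hnd : QNondeg Q) (hnd' : QNondeg Q') :
    ∃ e : V ≃ₗ[K] V, (∀ g v, e (ρ g v) = ρ g (e v)) ∧ ∀ v, Q' (e v) = Q v := by
  haveI : Nontrivial V := hs.1
  set B : LinearMap.BilinForm K V := Q.polarBilin with hBdef
  set B' : LinearMap.BilinForm K V := Q'.polarBilin with hB'def
  have hBs : ∀ v w, B v w = B w v := fun v w => by
    simp only [hBdef, polarBilin_apply_apply]; rw [polar_comm]
  have hB's : ∀ v w, B' v w = B' w v := fun v w => by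
    simp only [hB'def, polarBilin_apply_apply]; rw [polar_comm]
  have hBmove : ∀ (g : G) v w, B (ρ g v) w = B v (ρ g⁻¹ w) := fun g v w => by
    simp only [hBdef, polarBilin_apply_apply]; exact polar_move ρ Q hinv g v w
  have hB'move : ∀ (g : G) v w, B' (ρ g v) w = B' v (ρ g⁻¹ w) := fun g v w => by
    simp only [hB'def, polarBilin_apply_apply]; exact polar_move ρ Q' hinv' g v w
  -- B' is an isomorphism onto the dual
  have hB'inj : Function.Injective B' := by
    intro x y h
    have hxy : ∀ n, B' (x - y) n = 0 := by
      intro n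
      rw [_root_.map_sub, LinearMap.sub_apply, h, sub_self]
    exact sub_eq_zero.mp (hnd'.1 _ hxy)
  have hB'surj : Function.Surjective B' :=
    (LinearMap.injective_iff_surjective_of_finrank_eq_finrank
      Subspace.dual_finrank_eq.symm).mp hB'inj
  set Be : V ≃ₗ[K] Module.Dual K V := LinearEquiv.ofBijective B' ⟨hB'inj, hB'surj⟩
    with hBedef
  set φ : Module.End K V := Be.symm.toLinearMap ∘ₗ B with hφdef
  have hφ : ∀ v w, B' (φ v) w = B v w := by
    intro v w
    have h1 : B' (Be.symm (B v)) = B v := by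
      have := Be.apply_symm_apply (B v)
      exact this
    have h2 : φ v = Be.symm (B v) := rfl
    rw [h2, h1]
  have hφcomm : ∀ (g : G) v, φ (ρ g v) = ρ g (φ v) := by
    intro g v
    apply hB'inj
    ext w
    calc B' (φ (ρ g v)) w = B (ρ g v) w := hφ _ _
      _ = B v (ρ g⁻¹ w) := hBmove g v w
      _ = B' (φ v) (ρ g⁻¹ w) := (hφ _ _).symm
      _ = B' (ρ g (φ v)) w := (hB'move g (φ v) w).symm
  have hSAφ : ∀ v w, B' (φ v) w = B' v (φ w) := by
    intro v w
    rw [hφ, hBs, ← hφ w v, hB's]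
  have hφ0 : φ ≠ 0 := by
    obtain ⟨v, hv⟩ := exists_ne (0 : V)
    intro h
    apply hv
    apply hnd.1
    intro w
    rw [← hφ, h]
    simp
  -- finiteness
  haveI : Finite V := Module.finite_of_finite K
  haveI : Finite (Module.End K V) :=
    Finite.of_injective (fun f => (f : V → V)) DFunLike.coe_injective
  have two_End : ∀ x : Module.End K V, x + x = 0 := by
    intro x
    ext v
    show x v + x v = 0
    rw [← two_smul K (x v), char2K h2, zero_smul]
  -- the commutative subalgebra generated by φ
  set A : Subalgebra K (Module.End K V) := (Polynomial.aeval φ).range with hAdef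
  have hφA : φ ∈ A := ⟨Polynomial.X, Polynomial.aeval_X φ⟩
  have hAcomm : ∀ a b : Module.End K V, a ∈ A → b ∈ A → a * b = b * a := by
    rintro _ _ ⟨p, rfl⟩ ⟨q, rfl⟩
    rw [← map_mul, ← map_mul, mul_comm]
  have hpowcomm : ∀ (k : ℕ) (g : G) (v : V), (φ ^ k) (ρ g v) = ρ g ((φ ^ k) v) := by
    intro k
    induction k with
    | zero => intro g v; simp
    | succ n ih =>
        intro g v
        rw [pow_succ, Module.End.mul_apply, Module.End.mul_apply, hφcomm, ih]
  have hAcommρ : ∀ a : Module.End K V, a ∈ A → ∀ (g : G) (v : V),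
      a (ρ g v) = ρ g (a v) := by
    rintro _ ⟨p, rfl⟩ g v
    show (Polynomial.aeval φ p) (ρ g v) = ρ g ((Polynomial.aeval φ p) v)
    rw [Polynomial.aeval_eq_sum_range]
    simp only [LinearMap.sum_apply, LinearMap.smul_apply]
    rw [map_sum]
    refine Finset.sum_congr rfl fun i _ => ?_
    rw [_root_.map_smul, hpowcomm]
  have hpowSA : ∀ (k : ℕ) (v w : V), B' ((φ ^ k) v) w = B' v ((φ ^ k) w) := by
    intro k
    induction k with
    | zero => intro v w; simp
    | succ n ih =>
        intro v w
        have e1 : (φ ^ (n + 1)) v = (φ ^ n) (φ v) := by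
          rw [pow_succ, Module.End.mul_apply]
        have e2 : (φ ^ (n + 1)) w = φ ((φ ^ n) w) := by
          rw [pow_succ', Module.End.mul_apply]
        rw [e1, ih, hSAφ, ← e2]
  have hASA : ∀ a : Module.End K V, a ∈ A → ∀ v w, B' (a v) w = B' v (a w) := by
    rintro _ ⟨p, rfl⟩ v w
    show B' ((Polynomial.aeval φ p) v) w = B' v ((Polynomial.aeval φ p) w)
    rw [Polynomial.aeval_eq_sum_range]
    simp only [LinearMap.sum_apply, LinearMap.smul_apply, map_sum,
      LinearMap.map_smul, LinearMap.smul_apply]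
    refine Finset.sum_congr rfl fun i _ => ?_
    rw [hpowSA]
  -- square roots exist in A
  have hsqinjA : Function.Injective (fun a : ↥A => a * a) := by
    intro a b hab
    simp only at hab
    by_contra hne
    have hc : (a : Module.End K V) - b ≠ 0 := by
      intro h
      exact hne (Subtype.coe_injective (sub_eq_zero.mp h))
    have hcA : (a : Module.End K V) - b ∈ A := sub_mem a.2 b.2
    have hinj := schur_inj ρ hs _ (hAcommρ _ hcA) hc
    have h1 : (a : Module.End K V) * a = (b : Module.End K V) * b := by
      have := congrArg (Subtype.val) hab
      simpa using this
    have h2 : (a : Module.End K V) * b = (b : Module.End K V) * a :=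
      hAcomm _ _ a.2 b.2
    have hzero : ((a : Module.End K V) - b) * ((a : Module.End K V) - b) = 0 := by
      have expand : ((a : Module.End K V) - b) * ((a : Module.End K V) - b)
          = (a : Module.End K V) * a - a * b - ((b : Module.End K V) * a - b * b) := by
        noncomm_ring
      rw [expand, h1, h2]
      have e1 : (b : Module.End K V) * b - b * a - ((b : Module.End K V) * a - b * b)
          = ((b : Module.End K V) * b + b * b) - ((b : Module.End K V) * a + b * a) := by
        abel
      rw [e1, two_End, two_End, sub_zero]
    obtain ⟨v, hv⟩ := exists_ne (0 : V)
    have h3 : ((a : Module.End K V) - b) (((a : Module.End K V) - b) v) = 0 := by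
      rw [← Module.End.mul_apply, hzero]
      rfl
    have h4 : ((a : Module.End K V) - b) v = 0 := hinj (by rw [h3, map_zero])
    exact hv (hinj (by rw [h4, map_zero]))
  have hsq_surj : Function.Surjective (fun a : ↥A => a * a) :=
    Finite.injective_iff_surjective.mp hsqinjA
  obtain ⟨t', ht'⟩ := hsq_surj ⟨φ, hφA⟩
  set t : Module.End K V := (t' : Module.End K V) with htdef
  have htφ : t * t = φ := by
    have := congrArg (Subtype.val) ht'
    simpa using this
  have tcomm : ∀ (g : G) v, t (ρ g v) = ρ g (t v) := hAcommρ t t'.2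
  have tSA : ∀ v w, B' (t v) w = B' v (t w) := hASA t t'.2
  have hiso : ∀ v w, B' (t v) (t w) = B v w := by
    intro v w
    rw [tSA]
    have h1 : t (t w) = φ w := by rw [← Module.End.mul_apply, htφ]
    rw [h1, hB's, hφ, hBs]
  have ht0 : t ≠ 0 := by
    intro h
    apply hφ0
    rw [← htφ, h, zero_mul]
  have tinj : Function.Injective t := schur_inj ρ hs t tcomm ht0
  have tsurj : Function.Surjective t := LinearMap.injective_iff_surjective.mp tinj
  -- the difference Q'(t v) - Q v is additive and semilinear, hence zero
  set D : V → K := fun v => Q' (t v) - Q v with hDdef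
  have hDadd : ∀ v w, D (v + w) = D v + D w := by
    intro v w
    have hp : polar (⇑Q') (t v) (t w) = polar (⇑Q) v w := by
      have := hiso v w
      simpa only [hBdef, hB'def, polarBilin_apply_apply] using this
    rw [QuadraticMap.polar, QuadraticMap.polar] at hp
    simp only [hDdef, map_add]
    linear_combination hp
  have hDsmul : ∀ (c : K) v, D (c • v) = c * c * D v := by
    intro c v
    simp only [hDdef, _root_.map_smul, QuadraticMap.map_smul, smul_eq_mul]
    ring
  obtain ⟨fD, hfD⟩ := exists_lin_sqrt h2 D hDadd hDsmul
  have hfDinv : ∀ g v, fD (ρ g v) = fD v := by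
    intro g v
    apply sq_injK h2
    simp only
    rw [hfD, hfD]
    show Q' (t (ρ g v)) - Q (ρ g v) = Q' (t v) - Q v
    rw [tcomm, hinv' g (t v), hinv g v]
  by_cases hfD0 : fD = 0
  · have hDzero : ∀ v, Q' (t v) = Q v := by
      intro v
      have h := (hfD v).symm
      rw [hfD0] at h
      simp only [LinearMap.zero_apply, mul_zero] at h
      have h' : Q' (t v) - Q v = 0 := h
      linear_combination h'
    exact ⟨LinearEquiv.ofBijective t ⟨tinj, tsurj⟩, fun g v => tcomm g v,
      fun v => hDzero v⟩
  · exfalso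
    obtain ⟨F, _, _⟩ := equiv_of_inv_functional ρ hs fD hfD0 hfDinv
    have hz := polar_zero_of_equiv h2 F Q
    obtain ⟨v, hv⟩ := exists_ne (0 : V)
    apply hv
    apply hnd.1
    intro w
    rw [hBdef] at *
    simpa [polarBilin_apply_apply] using hz v w

/-- a non-zero `G`-invariant quadratic form `Q` on a simple `KG`-module is
either defined on the trivial module with zero polarization, or non-degenerate; and in
both cases it is the unique non-zero `G`-invariant quadratic form up to `KG`-isometry. -/
theorem stmt10 [Fintype K] (h2 : ringChar K = 2) [Finite G] [FiniteDimensional K V]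
    (ρ : Representation K G V) (hsimple : SimpleRep ρ)
    (Q : QuadraticForm K V) (hQ : Q ≠ 0) (hinv : GInvariantQF ρ Q) :
    (((∃ f : V ≃ₗ[K] K, ∀ g v, f (ρ g v) = f v) ∧ Q.polarBilin = 0) ∨ QNondeg Q) ∧
    ∀ Q' : QuadraticForm K V, Q' ≠ 0 → GInvariantQF ρ Q' →
      ∃ e : V ≃ₗ[K] V, (∀ g v, e (ρ g v) = ρ g (e v)) ∧ ∀ v, Q' (e v) = Q v := by
  haveI : Nontrivial V := hsimple.1
  rcases polar_cases ρ hsimple Q hinv with hz | hnd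
  · obtain ⟨F, hFinv, hFsq⟩ := triv_case h2 ρ hsimple Q hQ hinv hz
    constructor
    · left
      refine ⟨⟨F, hFinv⟩, ?_⟩
      ext v w
      simp only [polarBilin_apply_apply, LinearMap.zero_apply]
      exact hz v w
    · intro Q' hQ' hinv'
      have hz' := polar_zero_of_equiv h2 F Q'
      obtain ⟨F', hF'inv, hF'sq⟩ := triv_case h2 ρ hsimple Q' hQ' hinv' hz'
      exact triv_iso ρ F F' Q Q' hFsq hF'sq
  · constructor
    · right; exact hnd
    · intro Q' hQ' hinv'
      rcases polar_cases ρ hsimple Q' hinv' with hz' | hnd'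
      · exfalso
        obtain ⟨F', _, _⟩ := triv_case h2 ρ hsimple Q' hQ' hinv' hz'
        have hz := polar_zero_of_equiv h2 F' Q
        obtain ⟨v, hv⟩ := exists_ne (0 : V)
        apply hv
        apply hnd.1
        intro w
        simpa [polarBilin_apply_apply] using hz v w
      · exact nondeg_case h2 ρ hsimple Q Q' hinv hinv' hnd hnd'
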